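/- Let τ range over a finite set, p_θ(τ) > 0 differentiable in θ, S(τ) a stratum assignment with probabilities p_k(θ) = Pr_θ(S=k) > 0, μ_k(θ) = E_θ[R | S=k], σ_k(θ) > 0 the conditional standard deviation, and A_SAN(τ) = (R(τ) − μ_{S(τ)}(θ))/(σ_{S(τ)}(θ) + ε). Then E_θ[A_SAN(τ) · ∇_θ log p_θ(τ)] = ∑_k (p_k(θ)/(σ_k(θ)+ε)) · ∇_θ μ_k(θ). -/

import Mathlib

open Finset

/-- Population SAN expectation: the expected product of the SAN advantage with the
score equals the weighted sum of within-stratum gradients,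
`∑_k (p_k/(σ_k+ε)) ∇_θ μ_k(θ)`. -/
theorem population_san_expectation (Ω : Type*) [Fintype Ω] (I : ℕ)
    (p : ℝ → Ω → ℝ) (θ : ℝ) (R : Ω → ℝ) (S : Ω → Fin I) (ε : ℝ) (hε : 0 < ε)
    (hpos : ∀ t τ, 0 < p t τ) (hsum : ∀ t, ∑ τ, p t τ = 1)
    (hdiff : ∀ τ, DifferentiableAt ℝ (fun t => p t τ) θ)
    (pk : ℝ → Fin I → ℝ) (μ : ℝ → Fin I → ℝ) (σ : Fin I → ℝ)
    (hpk : ∀ t k, pk t k = ∑ τ ∈ univ.filter (fun τ => S τ = k), p t τ)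
    (hpkpos : ∀ k, 0 < pk θ k)
    (hμ : ∀ t k, μ t k =
      (∑ τ ∈ univ.filter (fun τ => S τ = k), p t τ * R τ) / pk t k)
    (hσ : ∀ k, σ k = Real.sqrt
      ((∑ τ ∈ univ.filter (fun τ => S τ = k), p θ τ * (R τ - μ θ k) ^ 2) / pk θ k))
    (hσpos : ∀ k, 0 < σ k) :
    ∑ τ, p θ τ * (((R τ - μ θ (S τ)) / (σ (S τ) + ε))
        * deriv (fun t => Real.log (p t τ)) θ)
      = ∑ k, (pk θ k / (σ k + ε)) * deriv (fun t => μ t k) θ := by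
  have hσε : ∀ k, σ k + ε ≠ 0 := fun k => by
    have := hσpos k; positivity
  set Dp : Ω → ℝ := fun τ => deriv (fun t => p t τ) θ with hDp
  have hderivlog : ∀ τ, deriv (fun t => Real.log (p t τ)) θ = Dp τ / p θ τ := by
    intro τ
    exact ((hdiff τ).hasDerivAt.log (hpos θ τ).ne').deriv
  have LHS_eq : ∀ τ, p θ τ * (((R τ - μ θ (S τ)) / (σ (S τ) + ε))
      * deriv (fun t => Real.log (p t τ)) θ)
      = ((R τ - μ θ (S τ)) / (σ (S τ) + ε)) * Dp τ := by
    intro τ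
    rw [hderivlog τ]
    have hne := (hpos θ τ).ne'
    rw [mul_comm (p θ τ), mul_assoc, div_mul_cancel₀ _ hne]
  simp_rw [LHS_eq]
  rw [← Finset.sum_fiberwise_of_maps_to (g := S) (t := univ)
      (fun τ _ => Finset.mem_univ (S τ))]
  refine Finset.sum_congr rfl fun k _ => ?_
  -- within fiber k
  have hfiber : ∀ τ ∈ univ.filter (fun τ => S τ = k),
      ((R τ - μ θ (S τ)) / (σ (S τ) + ε)) * Dp τ
      = ((R τ - μ θ k) / (σ k + ε)) * Dp τ := by
    intro τ hτ
    rw [(Finset.mem_filter.mp hτ).2]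
  rw [Finset.sum_congr rfl hfiber]
  -- derivative of pk and numerator
  have hpk' : HasDerivAt (fun t => pk t k)
      (∑ τ ∈ univ.filter (fun τ => S τ = k), Dp τ) θ := by
    have heq : (fun t => pk t k)
        = fun t => ∑ τ ∈ univ.filter (fun τ => S τ = k), p t τ :=
      funext fun t => hpk t k
    rw [heq]
    exact HasDerivAt.fun_sum fun τ _ => (hdiff τ).hasDerivAt
  have hN' : HasDerivAt (fun t => ∑ τ ∈ univ.filter (fun τ => S τ = k), p t τ * R τ)
      (∑ τ ∈ univ.filter (fun τ => S τ = k), Dp τ * R τ) θ :=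
    HasDerivAt.fun_sum fun τ _ => (hdiff τ).hasDerivAt.mul_const _
  have hμ' : HasDerivAt (fun t => μ t k)
      (((∑ τ ∈ univ.filter (fun τ => S τ = k), Dp τ * R τ) * pk θ k
        - (∑ τ ∈ univ.filter (fun τ => S τ = k), p θ τ * R τ)
          * (∑ τ ∈ univ.filter (fun τ => S τ = k), Dp τ)) / (pk θ k) ^ 2) θ := by
    have heq : (fun t => μ t k)
        = fun t => (∑ τ ∈ univ.filter (fun τ => S τ = k), p t τ * R τ) / pk t k :=
      funext fun t => hμ t k
    rw [heq]
    exact hN'.div hpk' (hpkpos k).ne'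
  rw [hμ'.deriv]
  have hpkne := (hpkpos k).ne'
  have hNeq : (∑ τ ∈ univ.filter (fun τ => S τ = k), p θ τ * R τ)
      = μ θ k * pk θ k := by
    rw [hμ θ k, div_mul_cancel₀ _ hpkne]
  rw [hNeq]
  have hexpand : ∑ τ ∈ univ.filter (fun τ => S τ = k),
      ((R τ - μ θ k) / (σ k + ε)) * Dp τ
      = ((∑ τ ∈ univ.filter (fun τ => S τ = k), Dp τ * R τ)
        - μ θ k * (∑ τ ∈ univ.filter (fun τ => S τ = k), Dp τ)) / (σ k + ε) := by
    rw [Finset.mul_sum, ← Finset.sum_sub_distrib, Finset.sum_div]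
    refine Finset.sum_congr rfl fun τ _ => ?_
    field_simp
  rw [hexpand]
  have h2 : ((∑ τ ∈ univ.filter (fun τ => S τ = k), Dp τ * R τ) * pk θ k
      - μ θ k * pk θ k * (∑ τ ∈ univ.filter (fun τ => S τ = k), Dp τ))
      = ((∑ τ ∈ univ.filter (fun τ => S τ = k), Dp τ * R τ)
        - μ θ k * (∑ τ ∈ univ.filter (fun τ => S τ = k), Dp τ)) * pk θ k := by
    ring
  rw [h2, pow_two, mul_div_mul_right _ _ hpkne, div_mul_div_comm,
    mul_comm (pk θ k)]
  exact (mul_div_mul_right _ _ hpkne).symm
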